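/- Let L be a random variable on a probability space with law P, and let J ≥ 0 be another random variable with E[J] > 0. If |E[e^{izL} | 𝔊]| ≤ E[e^{−(z²/π²) J} | 𝔊] pointwise for a σ-algebra 𝔊 (or directly |E[e^{izL}]| ≤ E[e^{−(z²/π²)J}]), then |E[e^{izL}]| ≤ e^{−(z²/(2π²)) E[J]} + 4 Var[J]/E[J]². -/

import Mathlib

open MeasureTheory ProbabilityTheory Real

/-- If `|E[e^{izL}]| ≤ E[e^{-(z²/π²) J}]` for a nonnegative random variable `J`
with `E[J] > 0`, then `|E[e^{izL}]| ≤ e^{-(z²/(2π²)) E[J]} + 4 Var[J]/E[J]²`. -/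
theorem stmt_13 {Ω : Type*} [MeasurableSpace Ω] (P : Measure Ω) [IsProbabilityMeasure P]
    (L J : Ω → ℝ) (hJ0 : ∀ ω, 0 ≤ J ω) (hJ2 : MemLp J 2 P)
    (hJpos : 0 < ∫ ω, J ω ∂P) (z : ℝ)
    (hbound : ‖∫ ω, Complex.exp (Complex.I * (z : ℂ) * (L ω : ℂ)) ∂P‖ ≤
      ∫ ω, Real.exp (-(z ^ 2 / π ^ 2) * J ω) ∂P) :
    ‖∫ ω, Complex.exp (Complex.I * (z : ℂ) * (L ω : ℂ)) ∂P‖ ≤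
      Real.exp (-(z ^ 2 / (2 * π ^ 2)) * ∫ ω, J ω ∂P) +
        4 * variance J P / (∫ ω, J ω ∂P) ^ 2 := by
  set μ := ∫ ω, J ω ∂P with hμdef
  have hπ : (0:ℝ) < π ^ 2 := by positivity
  set c := z ^ 2 / π ^ 2 with hcdef
  have hc : 0 ≤ c := by positivity
  -- measurable nonnegative modification of J
  obtain ⟨J'', hJ''meas, hJ''eq⟩ : ∃ J'', StronglyMeasurable J'' ∧ J =ᵐ[P] J'' :=
    ⟨_, hJ2.1.stronglyMeasurable_mk, hJ2.1.ae_eq_mk⟩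
  set J' : Ω → ℝ := fun ω => max (J'' ω) 0 with hJ'def
  have hJ'meas : StronglyMeasurable J' := hJ''meas.sup stronglyMeasurable_const
  have hJ'eq : J =ᵐ[P] J' := by
    filter_upwards [hJ''eq] with ω h
    simp [hJ'def, ← h, max_eq_left (hJ0 ω)]
  have hJ'0 : ∀ ω, 0 ≤ J' ω := fun ω => le_max_right _ _
  set A : Set Ω := {ω | J' ω ≤ μ / 2} with hAdef
  have hAmeas : MeasurableSet A := by
    exact measurableSet_le hJ'meas.measurable measurable_const
  -- integral of exp(-cJ) equals that of exp(-cJ')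
  have hint_eq : ∫ ω, Real.exp (-c * J ω) ∂P = ∫ ω, Real.exp (-c * J' ω) ∂P := by
    refine integral_congr_ae ?_
    filter_upwards [hJ'eq] with ω h
    rw [h]
  -- pointwise bound
  have hpt : ∀ ω, Real.exp (-c * J' ω) ≤
      Real.exp (-c * (μ / 2)) + A.indicator (fun _ => (1:ℝ)) ω := by
    intro ω
    by_cases hω : ω ∈ A
    · have h1 : Real.exp (-c * J' ω) ≤ 1 :=
        Real.exp_le_one_iff.mpr (by nlinarith [hJ'0 ω])
      have h2 : (0:ℝ) ≤ Real.exp (-c * (μ / 2)) := (Real.exp_pos _).le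
      rw [Set.indicator_of_mem hω]
      linarith
    · have hω' : μ / 2 < J' ω := lt_of_not_ge hω
      have h1 : Real.exp (-c * J' ω) ≤ Real.exp (-c * (μ / 2)) :=
        Real.exp_le_exp.mpr (by nlinarith)
      rw [Set.indicator_of_notMem hω]
      linarith
  -- integrability
  have hintL : Integrable (fun ω => Real.exp (-c * J' ω)) P := by
    refine Integrable.mono' (integrable_const 1) ?_ ?_
    · exact ((hJ'meas.const_smul (-c)).measurable.exp).aestronglyMeasurable
    · refine Filter.Eventually.of_forall fun ω => ?_
      rw [Real.norm_eq_abs, abs_of_pos (Real.exp_pos _)]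
      exact Real.exp_le_one_iff.mpr (by nlinarith [hJ'0 ω])
  have hintR : Integrable (fun ω => Real.exp (-c * (μ / 2)) +
      A.indicator (fun _ => (1:ℝ)) ω) P := by
    refine (integrable_const _).add ?_
    exact (integrable_const (1:ℝ)).indicator hAmeas
  have hstep : ∫ ω, Real.exp (-c * J' ω) ∂P ≤
      Real.exp (-c * (μ / 2)) + (P A).toReal := by
    calc ∫ ω, Real.exp (-c * J' ω) ∂P
        ≤ ∫ ω, (Real.exp (-c * (μ / 2)) + A.indicator (fun _ => (1:ℝ)) ω) ∂P :=
          integral_mono hintL hintR hpt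
      _ = Real.exp (-c * (μ / 2)) + (P A).toReal := by
          rw [integral_add (integrable_const _) ((integrable_const (1:ℝ)).indicator hAmeas),
            integral_const, integral_indicator hAmeas]
          simp [measureReal_def]
  -- Chebyshev
  have hAsub : P A ≤ P {ω | μ / 2 ≤ |J ω - μ|} := by
    have hsets : A ≤ᵐ[P] {ω | μ / 2 ≤ |J ω - μ|} := by
      filter_upwards [hJ'eq] with ω h
      intro hω
      have hω' : J' ω ≤ μ / 2 := hω
      have : J ω ≤ μ / 2 := by rw [h]; exact hω'
      show μ / 2 ≤ |J ω - μ|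
      rw [abs_of_nonpos (by linarith)]
      linarith
    exact measure_mono_ae hsets
  have hcheb : P {ω | μ / 2 ≤ |J ω - μ|} ≤ ENNReal.ofReal (variance J P / (μ / 2) ^ 2) :=
    meas_ge_le_variance_div_sq hJ2 (by linarith)
  have hvar_nonneg : 0 ≤ variance J P := variance_nonneg _ _
  have hPA : (P A).toReal ≤ 4 * variance J P / μ ^ 2 := by
    have h1 : (P A).toReal ≤ variance J P / (μ / 2) ^ 2 :=
      ENNReal.toReal_le_of_le_ofReal (by positivity) (hAsub.trans hcheb)
    have h2 : variance J P / (μ / 2) ^ 2 = 4 * variance J P / μ ^ 2 := by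
      field_simp
      ring
    linarith [h1, h2 ▸ h1]
  have hexp_eq : Real.exp (-(z ^ 2 / (2 * π ^ 2)) * μ) = Real.exp (-c * (μ / 2)) := by
    congr 1
    rw [hcdef]
    ring
  calc ‖∫ ω, Complex.exp (Complex.I * (z : ℂ) * (L ω : ℂ)) ∂P‖
      ≤ ∫ ω, Real.exp (-c * J ω) ∂P := hbound
    _ = ∫ ω, Real.exp (-c * J' ω) ∂P := hint_eq
    _ ≤ Real.exp (-c * (μ / 2)) + (P A).toReal := hstep
    _ ≤ Real.exp (-c * (μ / 2)) + 4 * variance J P / μ ^ 2 := by linarith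
    _ = Real.exp (-(z ^ 2 / (2 * π ^ 2)) * μ) + 4 * variance J P / μ ^ 2 := by
        rw [hexp_eq]
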